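/- arXiv:0706.1526 — 2 statements merged into one kernel-verified Lean document; each statement's English description precedes it below -/
import Mathlib

section
/- The square of F₆ is 7-colorable, yet the greedy (first-fit) algorithm can fail to color it optimally: there exist a linear order < on the 12 vertices of F₆ and a function c from the vertices to ℕ such that for every vertex v, c(v) is the least natural number not belonging to {c(u) : u < v and u is adjacent to v in F₆²}, and c attains a value ≥ 7 (i.e., this greedy coloring uses at least 8 colors). -/
open SimpleGraph

/-- The square `G²` of a simple graph `G`: two distinct vertices are adjacent iff
they are adjacent in `G` or have a common neighbor in `G`. -/
def SimpleGraph.square {V : Type*} (G : SimpleGraph V) : SimpleGraph V where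
  Adj u v := u ≠ v ∧ (G.Adj u v ∨ ∃ w, G.Adj u w ∧ G.Adj w v)
  symm := by
    constructor
    rintro u v ⟨hne, h | ⟨w, h1, h2⟩⟩
    · exact ⟨hne.symm, Or.inl h.symm⟩
    · exact ⟨hne.symm, Or.inr ⟨w, h2.symm, h1.symm⟩⟩
  loopless := ⟨fun u h => h.1 rfl⟩

/-- A finite simple graph is outerplanar iff it has a one-page book embedding:
a linear order (here realized by an injection into `ℕ`) on its vertices such that
no two edges "cross", i.e. there are no vertices `a < c < b < d` with both
`{a,b}` and `{c,d}` edges. -/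
def SimpleGraph.IsOuterplanar {V : Type*} (G : SimpleGraph V) : Prop :=
  ∃ f : V → ℕ, Function.Injective f ∧
    ∀ a b c d : V, G.Adj a b → G.Adj c d →
      ¬(f a < f c ∧ f c < f b ∧ f b < f d)

/-- The degree of a vertex, as the cardinality of its neighbor set. -/
noncomputable def SimpleGraph.deg {V : Type*} (G : SimpleGraph V) (v : V) : ℕ :=
  (G.neighborSet v).ncard

/-- The maximum degree `Δ` of a finite graph. -/
noncomputable def SimpleGraph.maxDeg {V : Type*} [Fintype V] (G : SimpleGraph V) : ℕ :=
  Finset.univ.sup fun v => G.deg v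

/-- The degree of `v` inside the subgraph of `G` induced by the vertex set `s`. -/
noncomputable def SimpleGraph.degIn {V : Type*} (G : SimpleGraph V) (s : Finset V) (v : V) : ℕ :=
  {u | u ∈ s ∧ G.Adj v u}.ncard

/-- The inductiveness (degeneracy) of a finite graph: the maximum over all nonempty
induced subgraphs of the minimum degree of the induced subgraph. -/
noncomputable def SimpleGraph.inductiveness {V : Type*} [Fintype V]
    (G : SimpleGraph V) : ℕ :=
  Finset.univ.powerset.sup fun s =>
    if h : s.Nonempty then s.inf' h (G.degIn s) else 0

/-- A graph is chordal if every cycle of length at least 4 has a chord: two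
vertices of the cycle, adjacent in the graph, whose joining edge is not an edge
of the cycle (i.e. they are nonconsecutive on the cycle). -/
def SimpleGraph.IsChordal {V : Type*} (G : SimpleGraph V) : Prop :=
  ∀ ⦃v : V⦄ (w : G.Walk v v), w.IsCycle → 4 ≤ w.length →
    ∃ a b : V, a ∈ w.support ∧ b ∈ w.support ∧ G.Adj a b ∧ s(a, b) ∉ w.edges

/-- A finite graph is biconnected if it has at least 3 vertices, is connected,
and deleting any single vertex leaves it connected. -/
def SimpleGraph.Biconnected {V : Type*} [Fintype V] (G : SimpleGraph V) : Prop :=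
  3 ≤ Fintype.card V ∧ G.Connected ∧
    ∀ v : V, ((G.induce {u | u ≠ v}).Connected)

/-- `G` is `k`-choosable: for every assignment of lists of exactly `k` colors to
the vertices there is a proper coloring choosing each vertex's color from its list. -/
def SimpleGraph.Choosable {V : Type*} (G : SimpleGraph V) (k : ℕ) : Prop :=
  ∀ L : V → Finset ℕ, (∀ v, (L v).card = k) →
    ∃ c : V → ℕ, (∀ v, c v ∈ L v) ∧ ∀ u v, G.Adj u v → c u ≠ c v

/-- `F₄`: the 6-vertex graph obtained from the triangle `0 1 2` by adding, for each
edge of the triangle, a new vertex (`3 = y₀₁`, `4 = y₁₂`, `5 = y₀₂`) adjacent to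
exactly the two endpoints of that edge. -/
def F4 : SimpleGraph (Fin 6) :=
  SimpleGraph.fromEdgeSet
    {s(0, 1), s(1, 2), s(0, 2), s(3, 0), s(3, 1), s(4, 1), s(4, 2), s(5, 0), s(5, 2)}

/-- `F₆`: the 12-vertex graph obtained from `F₄` by adding, for each of the six edges
`xᵢyᵢⱼ` between a triangle vertex and an added vertex, a new vertex adjacent to
exactly the two endpoints of that edge (vertices `6,…,11`). -/
def F6 : SimpleGraph (Fin 12) :=
  SimpleGraph.fromEdgeSet
    {s(0, 1), s(1, 2), s(0, 2), s(3, 0), s(3, 1), s(4, 1), s(4, 2), s(5, 0), s(5, 2),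
     s(6, 0), s(6, 3), s(7, 1), s(7, 3), s(8, 1), s(8, 4), s(9, 2), s(9, 4),
     s(10, 0), s(10, 5), s(11, 2), s(11, 5)}

/-- The rigid ladder `RL n`.  For even `n = 2k` it has vertices `u₁,…,u_k,v₁,…,v_k`
and edges `uᵢvᵢ, uᵢuᵢ₊₁, uᵢvᵢ₊₁, vᵢvᵢ₊₁` (for `1 ≤ i ≤ k-1`) together with `u_k v_k`;
for odd `n` it is `RL (n+1)` with the vertex `u_{(n+1)/2}` deleted.  We use the zigzag
labelling `vᵢ ↦ 2i - 2`, `uᵢ ↦ 2i - 1` (under which deleting `u_{(n+1)/2} = n` from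
`RL (n+1)` leaves exactly the labels `0,…,n-1`); under this labelling two vertices are
adjacent iff their labels differ by exactly 1 or 2. -/
def rigidLadder (n : ℕ) : SimpleGraph (Fin n) where
  Adj a b := a ≠ b ∧ Nat.dist a.val b.val ≤ 2
  symm := by
    constructor
    rintro a b ⟨h1, h2⟩
    exact ⟨h1.symm, by rwa [Nat.dist_comm]⟩
  loopless := ⟨fun a h => h.1 rfl⟩

lemma F6_adj (u v : Fin 12) : F6.Adj u v ↔
    (s(u, v) = s(0, 1) ∨ s(u, v) = s(1, 2) ∨ s(u, v) = s(0, 2) ∨ s(u, v) = s(3, 0) ∨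
     s(u, v) = s(3, 1) ∨ s(u, v) = s(4, 1) ∨ s(u, v) = s(4, 2) ∨ s(u, v) = s(5, 0) ∨
     s(u, v) = s(5, 2) ∨ s(u, v) = s(6, 0) ∨ s(u, v) = s(6, 3) ∨ s(u, v) = s(7, 1) ∨
     s(u, v) = s(7, 3) ∨ s(u, v) = s(8, 1) ∨ s(u, v) = s(8, 4) ∨ s(u, v) = s(9, 2) ∨
     s(u, v) = s(9, 4) ∨ s(u, v) = s(10, 0) ∨ s(u, v) = s(10, 5) ∨ s(u, v) = s(11, 2) ∨
     s(u, v) = s(11, 5)) ∧ u ≠ v := by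
  simp [F6, SimpleGraph.fromEdgeSet_adj, Set.mem_insert_iff, Set.mem_singleton_iff]

instance : DecidableRel F6.Adj := fun u v => decidable_of_iff _ (F6_adj u v).symm

instance : DecidableRel F6.square.Adj := fun u v =>
  decidable_of_iff (u ≠ v ∧ (F6.Adj u v ∨ ∃ w, F6.Adj u w ∧ F6.Adj w v)) Iff.rfl

lemma nat_sInf_eq {s : Set ℕ} {k : ℕ} (hk : k ∈ s) (h : ∀ m < k, m ∉ s) : sInf s = k :=
  le_antisymm (Nat.sInf_le hk) (not_lt.1 fun hl => h _ hl (Nat.sInf_mem ⟨k, hk⟩))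

def gOrd : Fin 12 → Fin 12 := ![11, 5, 10, 8, 3, 9, 0, 7, 4, 2, 6, 1]
def gOrdInv : Fin 12 → Fin 12 := ![6, 11, 9, 4, 8, 1, 10, 7, 3, 5, 2, 0]
def gCol : Fin 12 → ℕ := ![7, 3, 6, 4, 2, 5, 0, 1, 0, 1, 1, 0]

def gEquiv : Fin 12 ≃ Fin 12 where
  toFun := gOrd
  invFun := gOrdInv
  left_inv := by decide
  right_inv := by decide

/-- `F₆²` is 7-colorable, yet greedy (first-fit) coloring can fail
to be optimal: there is a linear order on the 12 vertices of `F₆` (given by an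
equivalence `e` with the standard order on `Fin 12`) and a function `c` such that
every vertex gets the least color not used among its earlier neighbors in `F₆²`,
while `c` attains a value `≥ 7` (so this greedy coloring uses at least 8 colors). -/
theorem stmt11 :
    F6.square.Colorable 7 ∧
    ∃ (e : Fin 12 ≃ Fin 12) (c : Fin 12 → ℕ),
      (∀ v, c v = sInf {n : ℕ | ∀ u, e u < e v → F6.square.Adj u v → c u ≠ n}) ∧
      ∃ v, 7 ≤ c v := by
  constructor
  · exact ⟨SimpleGraph.Coloring.mk (![0, 1, 2, 3, 4, 5, 4, 6, 5, 6, 6, 3] : Fin 12 → Fin 7)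
      (by decide)⟩
  · refine ⟨gEquiv, gCol, fun v => ?_, 0, by norm_num [gCol]⟩
    have key : ∀ v : Fin 12,
        (∀ u, gOrd u < gOrd v → F6.square.Adj u v → gCol u ≠ gCol v) ∧
        ∀ m < gCol v, ¬ (∀ u, gOrd u < gOrd v → F6.square.Adj u v → gCol u ≠ m) := by
      decide
    exact (nat_sInf_eq (s := {n : ℕ | ∀ u, gEquiv u < gEquiv v → F6.square.Adj u v → gCol u ≠ n})
      (key v).1 (key v).2).symm
end

section
/- Let G be a finite outerplanar simple graph with maximum degree Δ ≥ 5. Then ω(G²) = Δ + 1. -/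
open SimpleGraph

private lemma core_lemma {V : Type*} [Fintype V] (G : SimpleGraph V) (f : V → ℕ)
    (hinj : Function.Injective f)
    (hNC : ∀ a b c d : V, G.Adj a b → G.Adj c d → ¬(f a < f c ∧ f c < f b ∧ f b < f d))
    (S : Finset V)
    (hS : ∀ x ∈ S, ∀ y ∈ S, x ≠ y → G.Adj x y ∨ ∃ w, G.Adj x w ∧ G.Adj w y)
    (m a₁ a₂ a₃ b₁ b₂ b₃ t : V)
    (hm : m ∈ S) (ha₁ : a₁ ∈ S) (ha₂ : a₂ ∈ S) (ha₃ : a₃ ∈ S)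
    (hb₁ : b₁ ∈ S) (hb₂ : b₂ ∈ S) (hb₃ : b₃ ∈ S) (htS : t ∈ S)
    (o1 : f a₁ < f a₂) (o2 : f a₂ < f a₃) (o3 : f a₃ < f m)
    (o4 : f m < f b₁) (o5 : f b₁ < f b₂) (o6 : f b₂ < f b₃)
    (htm : f m < f t) (hmt : ¬ G.Adj m t) :
    ∃ v, ∀ s ∈ S, s ≠ v → G.Adj v s := by
  classical
  have cross : ∀ {a b c d : V}, G.Adj a b → G.Adj c d →
      f a < f c → f c < f b → f b < f d → False :=
    fun h1 h2 u v w => hNC _ _ _ _ h1 h2 ⟨u, v, w⟩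
  have pair : ∀ {x y : V}, x ∈ S → y ∈ S → f x ≠ f y →
      G.Adj x y ∨ ∃ w, G.Adj x w ∧ G.Adj w y := by
    intro x y hx hy hne
    exact hS x hx y hy fun h => hne (by rw [h])
  -- a spanning edge exists
  have hspan : ∃ a b : V, G.Adj a b ∧ f a < f m ∧ f m < f b := by
    rcases pair ha₁ htS (by omega) with h | ⟨w, h1, h2⟩
    · exact ⟨a₁, t, h, by omega, htm⟩
    · rcases lt_trichotomy (f w) (f m) with hw | hw | hw
      · exact ⟨w, t, h2, hw, htm⟩
      · exact absurd (by rw [← hinj hw]; exact h2) hmt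
      · exact ⟨a₁, w, h1, by omega, hw⟩
  obtain ⟨e₁, e₂, he, he1, he2⟩ := hspan
  -- the bottleneck p
  obtain ⟨p, hpE, hpmax⟩ :=
    Finset.exists_max_image
      (Finset.univ.filter fun a => f a < f m ∧ ∃ b, G.Adj a b ∧ f m < f b) f
      ⟨e₁, by
        simp only [Finset.mem_filter, Finset.mem_univ, true_and]
        exact ⟨he1, e₂, he, he2⟩⟩
  simp only [Finset.mem_filter, Finset.mem_univ, true_and] at hpE
  obtain ⟨hpm, b₀, hb₀, hb₀m⟩ := hpE
  have hpmax' : ∀ a b, G.Adj a b → f a < f m → f m < f b → f a ≤ f p := by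
    intro a b hab ha hb
    refine hpmax a ?_
    simp only [Finset.mem_filter, Finset.mem_univ, true_and]
    exact ⟨ha, b, hab, hb⟩
  -- the bottleneck q
  obtain ⟨q, hqE, hqmin⟩ :=
    Finset.exists_min_image (Finset.univ.filter fun b => G.Adj p b ∧ f m < f b) f
      ⟨b₀, by
        simp only [Finset.mem_filter, Finset.mem_univ, true_and]
        exact ⟨hb₀, hb₀m⟩⟩
  simp only [Finset.mem_filter, Finset.mem_univ, true_and] at hqE
  obtain ⟨hpq, hmq⟩ := hqE
  have hqmin' : ∀ b, G.Adj p b → f m < f b → f q ≤ f b := by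
    intro b h1 h2
    refine hqmin b ?_
    simp only [Finset.mem_filter, Finset.mem_univ, true_and]
    exact ⟨h1, h2⟩
  -- structural facts
  have P2 : ∀ a b, G.Adj a b → f a < f m → f m < f b → f a ≤ f p ∧ f q ≤ f b := by
    intro a b hab ha hb
    have h1 : f a ≤ f p := hpmax' a b hab ha hb
    refine ⟨h1, ?_⟩
    rcases eq_or_lt_of_le h1 with h2 | h2
    · have hap : a = p := hinj h2
      exact hqmin' b (by rwa [hap] at hab) hb
    · by_contra hc
      push_neg at hc
      exact cross hab hpq h2 (by omega) hc
  have P3 : ∀ x, G.Adj m x → f p ≤ f x ∧ f x ≤ f q := by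
    intro x hx
    constructor
    · by_contra hc; push_neg at hc
      exact cross hx.symm hpq hc hpm hmq
    · by_contra hc; push_neg at hc
      exact cross hpq hx hpm hmq hc
  have P4 : ∀ x y, G.Adj x y → f x < f p → f p < f y → f q ≤ f y := by
    intro x y h hx hy; by_contra hc; push_neg at hc
    exact cross h hpq hx hy hc
  have P4' : ∀ x y, G.Adj x y → f x < f q → f q < f y → f x ≤ f p := by
    intro x y h hx hy; by_contra hc; push_neg at hc
    exact cross hpq h hc hx hy
  have P6 : ∀ x, f p < f x → f x < f m → ∀ y, G.Adj x y → f p ≤ f y ∧ f y ≤ f m := by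
    intro x hx1 hx2 y hxy
    constructor
    · by_contra hc; push_neg at hc
      have := P4 y x hxy.symm hc hx1
      omega
    · by_contra hc; push_neg at hc
      have := (P2 x y hxy hx2 hc).1
      omega
  have P6' : ∀ x, f m < f x → f x < f q → ∀ y, G.Adj x y → f m ≤ f y ∧ f y ≤ f q := by
    intro x hx1 hx2 y hxy
    constructor
    · by_contra hc; push_neg at hc
      have := (P2 y x hxy.symm hc hx1).2
      omega
    · by_contra hc; push_neg at hc
      have := P4' x y hxy hx2 hc
      omega
  by_cases hIR : ∃ r ∈ S, f m < f r ∧ f r < f q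
  · -- CASE I : some element of S strictly inside (m,q)
    obtain ⟨r₀, hr₀S, hr₀1, hr₀2⟩ := hIR
    have hC1 : ∀ l ∈ S, f l < f p → ∀ r ∈ S, f m < f r → f r < f q →
        G.Adj q l ∧ G.Adj q r := by
      intro l hl hlp r hr hr1 hr2
      rcases pair hl hr (by omega) with h | ⟨w, h1, h2⟩
      · have := P4 l r h hlp (by omega); omega
      · have hw := P6' r hr1 hr2 w h2.symm
        have hq1 : f q ≤ f w := P4 l w h1 hlp (by omega)
        have hfw : f w = f q := by omega
        have hwq : w = q := hinj hfw
        subst hwq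
        exact ⟨h1.symm, h2⟩
    have hC2 : ∀ l ∈ S, f p < f l → f l < f m → ∀ r ∈ S, f m < f r → f r < f q →
        G.Adj m l ∧ G.Adj m r := by
      intro l hl hl1 hl2 r hr hr1 hr2
      rcases pair hl hr (by omega) with h | ⟨w, h1, h2⟩
      · have := (P2 l r h hl2 hr1).1; omega
      · have hwl := P6 l hl1 hl2 w h1
        have hwr := P6' r hr1 hr2 w h2.symm
        have hfw : f w = f m := by omega
        have hwm : w = m := hinj hfw
        subst hwm
        exact ⟨h1.symm, h2⟩
    by_cases hIL : ∃ l ∈ S, f p < f l ∧ f l < f m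
    · -- CASE I.a : also an element inside (p,m) ⇒ contradiction
      obtain ⟨l', hl'S, hl'1, hl'2⟩ := hIL
      exfalso
      have h1L : ∀ l ∈ S, f p < f l → f l < f m → G.Adj m l :=
        fun l hl u v => (hC2 l hl u v r₀ hr₀S hr₀1 hr₀2).1
      have h1R : ∀ r ∈ S, f m < f r → f r < f q → G.Adj m r :=
        fun r hr u v => (hC2 l' hl'S hl'1 hl'2 r hr u v).2
      have h3 : ∀ l ∈ S, f p < f l → f l < f m → G.Adj p l := by
        intro l hl hl1 hl2
        rcases pair hl htS (by omega) with h | ⟨w, h1, h2⟩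
        · have := (P2 l t h hl2 htm).1; omega
        · have hw := P6 l hl1 hl2 w h1
          rcases eq_or_lt_of_le hw.2 with he | hlt
          · exact absurd (by rw [← hinj he]; exact h2) hmt
          · have := (P2 w t h2 hlt htm).1
            have hfw : f w = f p := by omega
            rw [hinj hfw] at h1
            exact h1.symm
      have hplm : ∀ l ∈ S, f l < f p → G.Adj p l := by
        intro l hl hlp
        rcases pair hl hl'S (by omega) with h | ⟨w, h1, h2⟩
        · have := P4 l l' h hlp (by omega); omega
        · have hw := P6 l' hl'1 hl'2 w h2.symm
          rcases eq_or_lt_of_le hw.1 with he | hlt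
          · rw [← hinj he] at h1
            exact h1.symm
          · have := P4 l w h1 hlp hlt; omega
      have kill2L : ∀ x ∈ S, ∀ y ∈ S, f x < f y → f y < f p → False := by
        intro x hx y hy h1 h2
        exact cross (hplm x hx (by omega)).symm
          (hC1 y hy h2 r₀ hr₀S hr₀1 hr₀2).1.symm h1 h2 (by omega)
      have kill2InL : ∀ x ∈ S, ∀ y ∈ S, f p < f x → f x < f y → f y < f m → False := by
        intro x hx y hy u v w
        exact cross (h3 y hy (by omega) w) (h1L x hx u (by omega)).symm u v (by omega)
      have ha₂p : f a₂ = f p := by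
        rcases lt_trichotomy (f a₂) (f p) with h | h | h
        · exact (kill2L a₁ ha₁ a₂ ha₂ o1 h).elim
        · exact h
        · exact (kill2InL a₂ ha₂ a₃ ha₃ h o2 o3).elim
      have ha₁p : f a₁ < f p := by omega
      have kill2InR : ∀ x ∈ S, ∀ y ∈ S, f m < f x → f x < f y → f y < f q → False := by
        intro x hx y hy u v w
        exact cross (h1R y hy (by omega) w)
          (hC1 a₁ ha₁ ha₁p x hx u (by omega)).2.symm u v (by omega)
      have hb₃q : f q < f b₃ := by
        rcases lt_trichotomy (f b₃) (f q) with h | h | h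
        · exact (kill2InR b₂ hb₂ b₃ hb₃ (by omega) o6 h).elim
        · exact (kill2InR b₁ hb₁ b₂ hb₂ o4 o5 (by omega)).elim
        · exact h
      have h10 : G.Adj p b₃ := by
        rcases pair hl'S hb₃ (by omega) with h | ⟨w, h1, h2⟩
        · have := P4' l' b₃ h (by omega) hb₃q; omega
        · have hw := P6 l' hl'1 hl'2 w h1
          have := P4' w b₃ h2 (by omega) hb₃q
          have hfw : f w = f p := by omega
          rw [hinj hfw] at h2
          exact h2
      exact cross (hC1 a₁ ha₁ ha₁p r₀ hr₀S hr₀1 hr₀2).1.symm h10 ha₁p (by omega) hb₃q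
    · -- CASE I.b : q dominates
      push_neg at hIL
      have ha₃p : f a₃ ≤ f p := by
        by_contra hc; push_neg at hc
        have := hIL a₃ ha₃ hc; omega
      have ha₂p : f a₂ < f p := by omega
      have ha₁p : f a₁ < f p := by omega
      have hqm : G.Adj q m := by
        rcases pair ha₁ hm (by omega) with h | ⟨w, h1, h2⟩
        · have := P4 a₁ m h ha₁p hpm; omega
        · have hw := P3 w h2.symm
          rcases eq_or_lt_of_le hw.1 with he | hlt
          · exfalso
            rw [← hinj he] at h1
            exact cross h1 (hC1 a₂ ha₂ ha₂p r₀ hr₀S hr₀1 hr₀2).1.symm o1 ha₂p (by omega)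
          · have := P4 a₁ w h1 ha₁p hlt
            have hfw : f w = f q := by omega
            rw [hinj hfw] at h2
            exact h2
      refine ⟨q, fun s hs hsne => ?_⟩
      rcases lt_trichotomy (f s) (f p) with h | h | h
      · exact (hC1 s hs h r₀ hr₀S hr₀1 hr₀2).1
      · rw [hinj h]; exact hpq.symm
      · rcases lt_trichotomy (f s) (f m) with h2 | h2 | h2
        · have := hIL s hs h; omega
        · rw [hinj h2]; exact hqm
        · rcases lt_trichotomy (f s) (f q) with h3 | h3 | h3
          · exact (hC1 a₁ ha₁ ha₁p s hs h2 h3).2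
          · exact absurd (hinj h3) hsne
          · rcases pair hr₀S hs (by omega) with h4 | ⟨w, h4, h5⟩
            · have := P4' r₀ s h4 hr₀2 h3; omega
            · have hw := P6' r₀ hr₀1 hr₀2 w h4
              rcases eq_or_lt_of_le hw.2 with he | hlt
              · rw [hinj he] at h5
                exact h5
              · have := P4' w s h5 hlt h3; omega
  · -- CASE II : no element of S inside (m,q)
    push_neg at hIR
    have hb₂q : f q < f b₂ := by
      have := hIR b₁ hb₁ o4; omega
    have hb₃q : f q < f b₃ := by omega
    have hhub : ∀ x ∈ S, (f x < f p ∨ f q < f x) →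
        (G.Adj p x ∧ G.Adj p m) ∨ (G.Adj q x ∧ G.Adj q m) := by
      intro x hx hcase
      rcases hcase with hxp | hxq
      · rcases pair hx hm (by omega) with h | ⟨w, h1, h2⟩
        · have := P4 x m h hxp hpm; omega
        · have hw := P3 w h2.symm
          rcases eq_or_lt_of_le hw.1 with he | hlt
          · rw [← hinj he] at h1 h2
            exact Or.inl ⟨h1.symm, h2⟩
          · have := P4 x w h1 hxp hlt
            have hfw : f w = f q := by omega
            rw [hinj hfw] at h1 h2
            exact Or.inr ⟨h1.symm, h2⟩
      · rcases pair hx hm (by omega) with h | ⟨w, h1, h2⟩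
        · exact (cross hpq h.symm hpm hmq hxq).elim
        · have hw := P3 w h2.symm
          rcases eq_or_lt_of_le hw.2 with he | hlt
          · have hwq : w = q := hinj he
            subst hwq
            exact Or.inr ⟨h1.symm, h2⟩
          · have := P4' w x h1.symm hlt hxq
            have hfw : f w = f p := by omega
            rw [hinj hfw] at h1 h2
            exact Or.inl ⟨h1.symm, h2⟩
    by_cases hIIL : ∃ l ∈ S, f p < f l ∧ f l < f m
    · -- CASE II.a : p dominates
      obtain ⟨l', hl'S, hl'1, hl'2⟩ := hIIL
      have hpin : ∀ x ∈ S, f p < f x → f x < f m → G.Adj p x := by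
        intro x hx h1 h2
        rcases pair hx htS (by omega) with h | ⟨w, hw1, hw2⟩
        · have := (P2 x t h h2 htm).1; omega
        · have hw := P6 x h1 h2 w hw1
          rcases eq_or_lt_of_le hw.2 with he | hlt
          · exact absurd (by rw [← hinj he]; exact hw2) hmt
          · have := (P2 w t hw2 hlt htm).1
            have hfw : f w = f p := by omega
            rw [hinj hfw] at hw1
            exact hw1.symm
      have hpr : ∀ r ∈ S, f q < f r → G.Adj p r := by
        intro r hr h1
        rcases pair hl'S hr (by omega) with h | ⟨w, hw1, hw2⟩
        · have := P4' l' r h (by omega) h1; omega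
        · have hw := P6 l' hl'1 hl'2 w hw1
          have := P4' w r hw2 (by omega) h1
          have hfw : f w = f p := by omega
          rw [hinj hfw] at hw2
          exact hw2
      have hpm' : G.Adj p m := by
        rcases hhub b₃ hb₃ (Or.inr hb₃q) with h | h
        · exact h.2
        · exact (cross (hpr b₂ hb₂ hb₂q) h.1 (by omega) hb₂q o6).elim
      have hpl : ∀ l ∈ S, f l < f p → G.Adj p l := by
        intro l hl h1
        rcases pair hl hl'S (by omega) with h | ⟨w, hw1, hw2⟩
        · have := P4 l l' h h1 (by omega); omega
        · have hw := P6 l' hl'1 hl'2 w hw2.symm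
          rcases eq_or_lt_of_le hw.1 with he | hlt
          · rw [← hinj he] at hw1
            exact hw1.symm
          · have := P4 l w hw1 h1 hlt; omega
      refine ⟨p, fun s hs hsne => ?_⟩
      rcases lt_trichotomy (f s) (f p) with h | h | h
      · exact hpl s hs h
      · exact absurd (hinj h) hsne
      · rcases lt_trichotomy (f s) (f m) with h2 | h2 | h2
        · exact hpin s hs h h2
        · rw [hinj h2]; exact hpm'
        · have h3 := hIR s hs h2
          rcases eq_or_lt_of_le h3 with he | hlt
          · rw [← hinj he]; exact hpq
          · exact hpr s hs hlt
    · -- CASE II.b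
      push_neg at hIIL
      have ha₃p : f a₃ ≤ f p := by
        by_contra hc; push_neg at hc
        have := hIIL a₃ ha₃ hc; omega
      have ha₂p : f a₂ < f p := by omega
      have ha₁p : f a₁ < f p := by omega
      by_cases hα : ∃ l ∈ S, f l < f p ∧ G.Adj q l
      · -- q dominates
        obtain ⟨l₀, hl₀S, hl₀p, hl₀q⟩ := hα
        have hr : ∀ r ∈ S, f q < f r → G.Adj q r ∧ G.Adj q m := by
          intro r hrS hrq
          rcases hhub r hrS (Or.inr hrq) with h | h
          · exact (cross hl₀q.symm h.1 hl₀p (by omega) hrq).elim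
          · exact h
        have hl : ∀ l ∈ S, f l < f p → G.Adj q l := by
          intro l hlS hlp
          by_contra hc
          rcases hhub l hlS (Or.inl hlp) with h | h
          · rcases lt_trichotomy (f l) (f l₀) with ho | ho | ho
            · exact cross h.1.symm hl₀q.symm ho hl₀p (by omega)
            · exact hc (by rw [hinj ho]; exact hl₀q)
            · rcases pair hlS hb₂ (by omega) with hd | ⟨w, hw1, hw2⟩
              · exact cross hd (hr b₃ hb₃ hb₃q).1 (by omega) hb₂q o6
              · rcases lt_trichotomy (f w) (f q) with hwq | hwq | hwq
                · exact cross hw2 (hr b₃ hb₃ hb₃q).1 hwq hb₂q o6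
                · rw [hinj hwq] at hw1
                  exact hc hw1.symm
                · exact cross hl₀q.symm hw1 ho (by omega) hwq
          · exact hc h.1
        refine ⟨q, fun s hs hsne => ?_⟩
        rcases lt_trichotomy (f s) (f p) with h | h | h
        · exact hl s hs h
        · rw [hinj h]; exact hpq.symm
        · rcases lt_trichotomy (f s) (f m) with h2 | h2 | h2
          · have := hIIL s hs h; omega
          · rw [hinj h2]; exact (hr b₂ hb₂ hb₂q).2
          · have h3 := hIR s hs h2
            rcases eq_or_lt_of_le h3 with he | hlt
            · exact absurd (hinj he).symm hsne
            · exact (hr s hs hlt).1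
      · push_neg at hα
        have hplm : ∀ l ∈ S, f l < f p → G.Adj p l ∧ G.Adj p m := by
          intro l hlS hlp
          rcases hhub l hlS (Or.inl hlp) with h | h
          · exact h
          · exact absurd h.1 (hα l hlS hlp)
        by_cases hβ : ∀ r ∈ S, f q < f r → G.Adj p r
        · -- p dominates
          refine ⟨p, fun s hs hsne => ?_⟩
          rcases lt_trichotomy (f s) (f p) with h | h | h
          · exact (hplm s hs h).1
          · exact absurd (hinj h) hsne
          · rcases lt_trichotomy (f s) (f m) with h2 | h2 | h2
            · have := hIIL s hs h; omega
            · rw [hinj h2]; exact (hplm a₁ ha₁ ha₁p).2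
            · have h3 := hIR s hs h2
              rcases eq_or_lt_of_le h3 with he | hlt
              · rw [← hinj he]; exact hpq
              · exact hβ s hs hlt
        · -- contradiction
          exfalso
          push_neg at hβ
          obtain ⟨rb, hrbS, hrbq, hrbp⟩ := hβ
          obtain ⟨r₀, hr₀T, hr₀min⟩ :=
            Finset.exists_min_image (S.filter fun r => f q < f r ∧ ¬ G.Adj p r) f
              ⟨rb, by
                simp only [Finset.mem_filter]
                exact ⟨hrbS, hrbq, hrbp⟩⟩
          simp only [Finset.mem_filter] at hr₀T
          obtain ⟨hr₀S, hr₀q, hr₀p⟩ := hr₀T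
          have hq0 : G.Adj q r₀ ∧ G.Adj q m := by
            rcases hhub r₀ hr₀S (Or.inr hr₀q) with h | h
            · exact absurd h.1 hr₀p
            · exact h
          have hr₀minAll : ∀ r ∈ S, f q < f r → f r₀ ≤ f r := by
            intro r hrS hrq
            by_contra hc; push_neg at hc
            by_cases hp : G.Adj p r
            · exact cross hp hq0.1 (by omega) hrq hc
            · refine absurd (hr₀min r ?_) (by omega)
              simp only [Finset.mem_filter]
              exact ⟨hrS, hrq, hp⟩
          have hpa₁ : G.Adj p a₁ := (hplm a₁ ha₁ ha₁p).1
          have hpa₂ : G.Adj p a₂ := (hplm a₂ ha₂ ha₂p).1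
          have ha1r : G.Adj a₁ r₀ := by
            rcases pair ha₂ hr₀S (by omega) with hd | ⟨w, hw1, hw2⟩
            · exact (cross hpa₁.symm hd o1 ha₂p (by omega)).elim
            · rcases lt_trichotomy (f w) (f a₁) with h1 | h1 | h1
              · exact (cross hw1.symm hpa₁.symm h1 o1 ha₂p).elim
              · rw [← hinj h1]
                exact hw2
              · rcases lt_trichotomy (f w) (f p) with h2 | h2 | h2
                · exact (cross hpa₁.symm hw2 h1 h2 (by omega)).elim
                · rw [hinj h2] at hw2
                  exact absurd hw2 hr₀p
                · exact (cross hpa₁.symm hw1 o1 ha₂p h2).elim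
          have hq2 : f r₀ < f b₃ := by
            have := hr₀minAll b₂ hb₂ hb₂q; omega
          rcases hhub b₃ hb₃ (Or.inr hb₃q) with h | h
          · exact cross ha1r h.1 ha₁p (by omega) hq2
          · exact cross ha1r h.1 (by omega) (by omega) hq2

private lemma dominator_lemma {V : Type*} [Fintype V] (G : SimpleGraph V) (f : V → ℕ)
    (hinj : Function.Injective f)
    (hNC : ∀ a b c d : V, G.Adj a b → G.Adj c d → ¬(f a < f c ∧ f c < f b ∧ f b < f d))
    (S : Finset V)
    (hS : ∀ x ∈ S, ∀ y ∈ S, x ≠ y → G.Adj x y ∨ ∃ w, G.Adj x w ∧ G.Adj w y)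
    (hcard : 7 ≤ S.card) :
    ∃ v, ∀ s ∈ S, s ≠ v → G.Adj v s := by
  classical
  have hc7 : 7 ≤ (S.image f).card := by
    rwa [Finset.card_image_of_injective S hinj]
  have hx : ∀ i : Fin 7, ∃ x ∈ S, f x =
      (S.image f).orderEmbOfFin rfl (Fin.castLE hc7 i) := by
    intro i
    have hmem : (S.image f).orderEmbOfFin rfl (Fin.castLE hc7 i) ∈ S.image f :=
      Finset.orderEmbOfFin_mem (S.image f) rfl _
    obtain ⟨x, hx1, hx2⟩ := Finset.mem_image.mp hmem
    exact ⟨x, hx1, hx2⟩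
  choose x hxS hxf using hx
  have hmono : ∀ i j : Fin 7, i < j → f (x i) < f (x j) := by
    intro i j hij
    rw [hxf i, hxf j]
    exact ((S.image f).orderEmbOfFin rfl).strictMono
      (by simp only [Fin.lt_def, Fin.coe_castLE]; exact hij)
  by_cases hdom : ∀ s ∈ S, s ≠ x 3 → G.Adj (x 3) s
  · exact ⟨x 3, hdom⟩
  push_neg at hdom
  obtain ⟨t, htS, htne, hmt⟩ := hdom
  rcases lt_trichotomy (f t) (f (x 3)) with hlt | heq | hgt
  · -- reflect the line
    have hle : ∀ v : V, f v ≤ Finset.univ.sup f := fun v =>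
      Finset.le_sup (Finset.mem_univ v)
    set N := Finset.univ.sup f with hN
    set g : V → ℕ := fun v => N - f v with hg
    have ginj : Function.Injective g := by
      intro u v huv
      have h1 := hle u; have h2 := hle v
      apply hinj
      simp only [hg] at huv
      omega
    have gord : ∀ u v : V, f u < f v ↔ g v < g u := by
      intro u v
      have h1 := hle u; have h2 := hle v
      simp only [hg]
      omega
    have gNC : ∀ a b c d : V, G.Adj a b → G.Adj c d →
        ¬(g a < g c ∧ g c < g b ∧ g b < g d) := by
      rintro a b c d hab hcd ⟨u1, u2, u3⟩
      exact hNC d c b a hcd.symm hab.symm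
        ⟨(gord d b).mpr u3, (gord b c).mpr u2, (gord c a).mpr u1⟩
    exact core_lemma G g ginj gNC S hS (x 3) (x 6) (x 5) (x 4) (x 2) (x 1) (x 0) t
      (hxS 3) (hxS 6) (hxS 5) (hxS 4) (hxS 2) (hxS 1) (hxS 0) htS
      ((gord (x 5) (x 6)).mp (hmono 5 6 (by decide)))
      ((gord (x 4) (x 5)).mp (hmono 4 5 (by decide)))
      ((gord (x 3) (x 4)).mp (hmono 3 4 (by decide)))
      ((gord (x 2) (x 3)).mp (hmono 2 3 (by decide)))
      ((gord (x 1) (x 2)).mp (hmono 1 2 (by decide)))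
      ((gord (x 0) (x 1)).mp (hmono 0 1 (by decide)))
      ((gord t (x 3)).mp hlt) hmt
  · exact absurd (hinj heq) htne
  · exact core_lemma G f hinj hNC S hS (x 3) (x 0) (x 1) (x 2) (x 4) (x 5) (x 6) t
      (hxS 3) (hxS 0) (hxS 1) (hxS 2) (hxS 4) (hxS 5) (hxS 6) htS
      (hmono 0 1 (by decide)) (hmono 1 2 (by decide)) (hmono 2 3 (by decide))
      (hmono 3 4 (by decide)) (hmono 4 5 (by decide)) (hmono 5 6 (by decide))
      hgt hmt


/-- For a finite outerplanar graph `G` with maximum degree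
`Δ ≥ 5`, `ω(G²) = Δ + 1`. -/
theorem stmt14 {V : Type*} [Fintype V] (G : SimpleGraph V)
    (hout : G.IsOuterplanar) (hΔ : 5 ≤ G.maxDeg) :
    G.square.cliqueNum = G.maxDeg + 1 := by
  classical
  obtain ⟨f, hinj, hNC⟩ := hout
  have hdegdeg : ∀ v : V, G.deg v = G.degree v := by
    intro v
    rw [SimpleGraph.deg, Set.ncard_eq_toFinset_card']
    rfl
  have hmax_ge : ∀ v : V, G.degree v ≤ G.maxDeg := fun v => by
    rw [← hdegdeg]
    exact Finset.le_sup (Finset.mem_univ v)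
  have hVne : Nonempty V := by
    by_contra h
    rw [not_nonempty_iff] at h
    have h0 : G.maxDeg = 0 := by
      rw [SimpleGraph.maxDeg, Finset.univ_eq_empty, Finset.sup_empty]
      rfl
    omega
  obtain ⟨v, -, hv⟩ :=
    Finset.exists_mem_eq_sup (Finset.univ : Finset V) Finset.univ_nonempty
      (fun u => G.deg u)
  have hvdeg : G.degree v = G.maxDeg := by
    rw [← hdegdeg, SimpleGraph.maxDeg, hv]
  -- lower bound
  have hclique : G.square.IsClique (insert v (G.neighborFinset v) : Finset V) := by
    intro a ha b hb hne
    simp only [Finset.coe_insert, Set.mem_insert_iff, Finset.mem_coe,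
      SimpleGraph.mem_neighborFinset] at ha hb
    refine ⟨hne, ?_⟩
    rcases ha with rfl | ha
    · rcases hb with rfl | hb
      · exact absurd rfl hne
      · exact Or.inl hb
    · rcases hb with rfl | hb
      · exact Or.inl ha.symm
      · exact Or.inr ⟨v, ha.symm, hb⟩
  have hcard : (insert v (G.neighborFinset v)).card = G.maxDeg + 1 := by
    rw [Finset.card_insert_of_notMem (by simp)]
    rw [SimpleGraph.card_neighborFinset_eq_degree, hvdeg]
  have hlow : G.maxDeg + 1 ≤ G.square.cliqueNum := by
    have h := SimpleGraph.IsClique.card_le_cliqueNum (tc := hclique)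
    rwa [hcard] at h
  -- upper bound
  obtain ⟨s, hs⟩ := G.square.exists_isNClique_cliqueNum
  have hupper : G.square.cliqueNum ≤ G.maxDeg + 1 := by
    rcases le_or_gt s.card 6 with h6 | h7
    · have := hs.card_eq
      omega
    · obtain ⟨w, hw⟩ := dominator_lemma G f hinj hNC s
        (fun a ha b hb hne =>
          (hs.isClique (Finset.mem_coe.mpr ha) (Finset.mem_coe.mpr hb) hne).2)
        (by omega)
      have hsub : s.erase w ⊆ G.neighborFinset w := by
        intro u hu
        rw [SimpleGraph.mem_neighborFinset]
        exact hw u (Finset.mem_of_mem_erase hu) (Finset.ne_of_mem_erase hu)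
      have hb := Finset.card_le_card hsub
      have hdegw := hmax_ge w
      have hce : s.card - 1 ≤ (s.erase w).card := by
        by_cases hws : w ∈ s
        · rw [Finset.card_erase_of_mem hws]
        · rw [Finset.erase_eq_of_notMem hws]; omega
      have hdw : (G.neighborFinset w).card = G.degree w := rfl
      have hcq := hs.card_eq
      omega
  exact le_antisymm hupper hlow
end
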